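/- Let Υ: U → Z be a random function between finite nonempty sets, given by probabilities P[υ_u = z], and let M be the (|Z|+1) × |U| real matrix whose rows are the vectors (P[υ_u = z])_{u∈U} for each z ∈ Z together with one additional all-ones row. If rank(M) = |U|, then for every finite nonempty set A and every invertible random function Ξ: A → U, the composition Υ∘Ξ: A → Z (given by P[(Υ∘Ξ)_a = z] = Σ_{u∈U} P[ξ_a = u]·P[υ_u = z]) is invertible. -/

import Mathlib

open Finset

/-- A random function `A → V`, given by the distributions `p a` on `V`, is invertible if
there is an independent random function `Γ : V → A` (distributions `g v` on `A`) with
`P[γ_{φ_a} = a] > P[γ_{φ_a} = x]` for every `a ∈ A` and every `x ≠ a`. -/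
def IsInvertible {A V : Type*} [Fintype A] [Fintype V] (p : A → V → ℝ) : Prop :=
  ∃ g : V → A → ℝ, (∀ v x, 0 ≤ g v x) ∧ (∀ v, ∑ x, g v x = 1) ∧
    ∀ a x, x ≠ a → ∑ v, p a v * g v x < ∑ v, p a v * g v a

/-- Let `Υ : U → Z` be a random function given by `q u z = P[υ_u = z]`,
and let `M` be the `(|Z|+1) × |U|` matrix whose rows are `(q u z)_{u}` for `z ∈ Z`
together with an all-ones row.  If `rank M = |U|`, then for every finite nonempty `A`
and every invertible random function `Ξ : A → U` the composition `Υ∘Ξ` is invertible. -/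
theorem stmt3 {U Z : Type*} [Fintype U] [Fintype Z] [Nonempty U] [Nonempty Z]
    [DecidableEq U]
    (q : U → Z → ℝ) (hq0 : ∀ u z, 0 ≤ q u z) (hq1 : ∀ u, ∑ z, q u z = 1)
    (hrank : (Matrix.of fun (r : Option Z) (u : U) =>
        Option.elim r 1 (fun z => q u z)).rank = Fintype.card U)
    (A : Type) [Fintype A] [Nonempty A]
    (p : A → U → ℝ) (hp0 : ∀ a u, 0 ≤ p a u) (hp1 : ∀ a, ∑ u, p a u = 1)
    (hinv : IsInvertible p) :
    IsInvertible (fun a z => ∑ u, p a u * q u z) := by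
  classical
  obtain ⟨g, hg0, hg1, hglt⟩ := hinv
  set M : Matrix (Option Z) U ℝ :=
    Matrix.of fun (r : Option Z) (u : U) => Option.elim r 1 (fun z => q u z) with hM
  have hsurj : Function.Surjective M.transpose.mulVecLin := by
    rw [← LinearMap.range_eq_top]
    apply Submodule.eq_top_of_finrank_eq
    have h1 : M.transpose.rank = Fintype.card U := by rw [Matrix.rank_transpose, hrank]
    simpa [Matrix.rank, Module.finrank_pi] using h1
  have hc0 : ∀ x : A, ∃ c : Option Z → ℝ,
      ∀ u, c none + ∑ z, c (some z) * q u z = g u x := by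
    intro x
    obtain ⟨c, hcc⟩ := hsurj (fun u => g u x)
    refine ⟨c, fun u => ?_⟩
    have h2 : ∑ r : Option Z, M r u * c r = g u x := by
      have h3 := congrFun hcc u
      simp only [Matrix.mulVecLin_apply, Matrix.mulVec, dotProduct,
        Matrix.transpose_apply] at h3
      exact h3
    rw [← h2, Fintype.sum_option]
    simp only [hM, Matrix.of_apply, Option.elim, one_mul]
    congr 1
    exact Finset.sum_congr rfl fun z _ => mul_comm _ _
  choose c hc using hc0
  set n : ℝ := (Fintype.card A : ℝ) with hn
  have hnpos : (0 : ℝ) < n := by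
    rw [hn]; exact_mod_cast Fintype.card_pos (α := A)
  set d : A → Z → ℝ := fun x z => c x (some z) + c x none with hd
  set avg : Z → ℝ := fun z => (∑ x, d x z) / n with havg
  set e : A → Z → ℝ := fun x z => d x z - avg z with he
  set B : ℝ := ∑ z, ∑ x, |e x z| with hB
  have hB0 : (0 : ℝ) ≤ B := Finset.sum_nonneg fun z _ =>
    Finset.sum_nonneg fun x _ => abs_nonneg _
  have heB : ∀ x z, |e x z| ≤ B := by
    intro x z
    calc |e x z| ≤ ∑ x', |e x' z| :=
          Finset.single_le_sum (fun x' _ => abs_nonneg (e x' z)) (Finset.mem_univ x)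
      _ ≤ B := Finset.single_le_sum
          (f := fun z' => ∑ x', |e x' z'|)
          (fun z' _ => Finset.sum_nonneg fun x' _ => abs_nonneg _) (Finset.mem_univ z)
  set ε : ℝ := 1 / (n * (B + 1)) with hε
  have hεpos : (0 : ℝ) < ε := by
    apply div_pos one_pos; positivity
  have hεB : ε * B ≤ 1 / n := by
    rw [hε, div_mul_eq_mul_div, div_le_div_iff₀ (by positivity) hnpos]
    nlinarith
  have hesum : ∀ z, ∑ x, e x z = 0 := by
    intro z
    simp only [he, havg, Finset.sum_sub_distrib, Finset.sum_const, Finset.card_univ,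
      nsmul_eq_mul, ← hn]
    field_simp
    ring
  have hkey1 : ∀ u x, ∑ z, q u z * d x z = g u x := by
    intro u x
    have h4 : ∑ z, q u z * d x z
        = (∑ z, c x (some z) * q u z) + (∑ z, q u z) * c x none := by
      rw [Finset.sum_mul, ← Finset.sum_add_distrib]
      exact Finset.sum_congr rfl fun z _ => by simp only [hd]; ring
    rw [h4, hq1, one_mul]
    linarith [hc x u]
  clear_value n d avg e B ε
  refine ⟨fun z x => 1 / n + ε * e x z, ?_, ?_, ?_⟩
  · intro z x
    show (0 : ℝ) ≤ 1 / n + ε * e x z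
    have h1 : -(ε * |e x z|) ≤ ε * e x z := by
      have h := mul_le_mul_of_nonneg_left (neg_abs_le (e x z)) hεpos.le
      rwa [mul_neg] at h
    have h2 : ε * |e x z| ≤ ε * B := mul_le_mul_of_nonneg_left (heB x z) hεpos.le
    linarith [hεB]
  · intro z
    show ∑ x, (1 / n + ε * e x z) = 1
    rw [Finset.sum_add_distrib, Finset.sum_const, Finset.card_univ, nsmul_eq_mul,
      ← Finset.mul_sum, hesum z, mul_zero, add_zero, ← hn]
    field_simp
  · intro a x hxa
    have hS : ∀ y : A, ∑ z, (∑ u, p a u * q u z) * (1 / n + ε * e y z)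
        = 1 / n + ε * ((∑ u, p a u * g u y) - ∑ z, (∑ u, p a u * q u z) * avg z) := by
      intro y
      have hQ1 : ∑ z, ∑ u, p a u * q u z = 1 := by
        rw [Finset.sum_comm]
        simp only [← Finset.mul_sum, hq1, mul_one, hp1]
      have hQd : ∑ z, (∑ u, p a u * q u z) * d y z = ∑ u, p a u * g u y := by
        have h5 : ∀ z, (∑ u, p a u * q u z) * d y z = ∑ u, p a u * (q u z * d y z) := by
          intro z; rw [Finset.sum_mul]; exact Finset.sum_congr rfl fun u _ => by ring
        simp only [h5]
        rw [Finset.sum_comm]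
        exact Finset.sum_congr rfl fun u _ => by rw [← Finset.mul_sum, hkey1 u y]
      have expand : ∀ z, (∑ u, p a u * q u z) * (1 / n + ε * e y z)
          = (1 / n) * (∑ u, p a u * q u z) + ε * ((∑ u, p a u * q u z) * d y z)
            - ε * ((∑ u, p a u * q u z) * avg z) := by
        intro z; simp only [he]; ring
      simp only [expand]
      rw [Finset.sum_sub_distrib, Finset.sum_add_distrib, ← Finset.mul_sum,
        ← Finset.mul_sum, ← Finset.mul_sum, hQ1, hQd]
      ring
    show ∑ z, (∑ u, p a u * q u z) * (1 / n + ε * e x z)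
        < ∑ z, (∑ u, p a u * q u z) * (1 / n + ε * e a z)
    rw [hS x, hS a]
    have h6 := mul_lt_mul_of_pos_left
      (sub_lt_sub_right (hglt a x hxa) (∑ z, (∑ u, p a u * q u z) * avg z)) hεpos
    linarith
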